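/- arXiv:2507.01138 — 4 statements merged into one kernel-verified Lean document; each statement's English description precedes it below -/
import Mathlib

section
/- For any abelian group H of order n, any graph G on n vertices with maximum degree d ≥ 1, and any subset U of H of size at most ⌈n/(2d)⌉ - 1, there exists a bijection f from the vertex set of G to H such that for every edge {u,v} of G, f(u) + f(v) ∉ U. -/
theorem stmt0 (n d : ℕ) (hd : 1 ≤ d) (H : Type*) [AddCommGroup H] [Fintype H]
    (hH : Fintype.card H = n) (G : SimpleGraph (Fin n)) [DecidableRel G.Adj]
    (hdeg : ∀ v, G.degree v ≤ d) (U : Finset H)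
    (hU : (U.card : ℤ) ≤ ⌈(n : ℚ) / (2 * d)⌉ - 1) :
    ∃ f : Fin n ≃ H, ∀ u v, G.Adj u v → f u + f v ∉ U := by
  classical
  -- From hU derive the key numeric bound 2 * d * |U| < n
  have hcard : 2 * d * U.card < n := by
    have h3 : (U.card : ℚ) ≤ (⌈(n : ℚ) / (2 * d)⌉ : ℚ) - 1 := by exact_mod_cast hU
    have h2 : ((⌈(n : ℚ) / (2 * d)⌉ : ℚ)) < (n : ℚ) / (2 * d) + 1 := Int.ceil_lt_add_one _
    have hd0 : (0 : ℚ) < 2 * d := by positivity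
    have h1 : (U.card : ℚ) < (n : ℚ) / (2 * d) := by linarith
    rw [lt_div_iff₀ hd0] at h1
    have h6 : ((2 * d * U.card : ℕ) : ℚ) < (n : ℚ) := by push_cast; linarith
    exact_mod_cast h6
  obtain ⟨e⟩ : Nonempty (Fin n ≃ H) := ⟨Fintype.equivOfCardEq (by simp [hH])⟩
  set P : (Fin n ≃ H) → Finset (Fin n × Fin n) := fun f =>
    Finset.univ.filter (fun p => G.Adj p.1 p.2 ∧ f p.1 + f p.2 ∈ U) with hPdef
  obtain ⟨f, -, hmin⟩ := Finset.exists_min_image Finset.univ (fun f => (P f).card)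
    ⟨e, Finset.mem_univ e⟩
  refine ⟨f, fun u v huv hmem => ?_⟩
  -- Suppose a bad edge (u, v) exists; we derive a contradiction with minimality.
  set S : Finset (Fin n) := Finset.univ.filter (fun x => f u + f x ∈ U) with hSdef
  have hScard : S.card ≤ U.card := by
    apply Finset.card_le_card_of_injOn (fun x => f u + f x)
    · intro x hx
      exact Finset.mem_coe.mpr (Finset.mem_filter.mp (Finset.mem_coe.mp hx)).2
    · intro x _ y _ hxy
      exact f.injective (by exact add_left_cancel hxy)
  set A : Finset (Fin n) := S.biUnion (fun x => G.neighborFinset x) with hAdef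
  set B : Finset (Fin n) := (G.neighborFinset u).biUnion
    (fun x => Finset.univ.filter (fun w => f w + f x ∈ U)) with hBdef
  have hAmem : ∀ w x, G.Adj w x → f u + f x ∈ U → w ∈ A := by
    intro w x hadj hmemU
    rw [hAdef, Finset.mem_biUnion]
    exact ⟨x, by simp [hSdef, hmemU], by simp [hadj.symm]⟩
  have hBmem : ∀ w x, G.Adj u x → f w + f x ∈ U → w ∈ B := by
    intro w x hadj hmemU
    rw [hBdef, Finset.mem_biUnion]
    exact ⟨x, by simp [hadj], by simp [hmemU]⟩
  have hAcard : A.card ≤ U.card * d := by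
    calc A.card ≤ S.card * d := by
          apply Finset.card_biUnion_le_card_mul
          intro x _
          rw [SimpleGraph.card_neighborFinset_eq_degree]
          exact hdeg x
      _ ≤ U.card * d := Nat.mul_le_mul_right d hScard
  have hBcard : B.card ≤ d * U.card := by
    calc B.card ≤ (G.neighborFinset u).card * U.card := by
          apply Finset.card_biUnion_le_card_mul
          intro x _
          apply Finset.card_le_card_of_injOn (fun w => f w + f x)
          · intro w hw
            exact Finset.mem_coe.mpr (Finset.mem_filter.mp (Finset.mem_coe.mp hw)).2
          · intro a _ b _ hab
            exact f.injective (by exact add_right_cancel hab)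
      _ ≤ d * U.card := by
          apply Nat.mul_le_mul_right
          rw [SimpleGraph.card_neighborFinset_eq_degree]
          exact hdeg u
  have huA : u ∈ A := hAmem u v huv hmem
  have huB : u ∈ B := hBmem u v huv hmem
  set Bad : Finset (Fin n) := A ∪ (B ∪ {v}).erase u with hBaddef
  have hBadcard : Bad.card < n := by
    have h1 : ((B ∪ {v}).erase u).card ≤ B.card := by
      have := Finset.card_erase_of_mem (a := u) (s := B ∪ {v})
        (Finset.mem_union_left _ huB)
      have h2 : (B ∪ {v}).card ≤ B.card + 1 := by
        calc (B ∪ {v}).card ≤ B.card + ({v} : Finset (Fin n)).card :=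
              Finset.card_union_le _ _
          _ = B.card + 1 := by simp
      omega
    have h3 : Bad.card ≤ A.card + ((B ∪ {v}).erase u).card := Finset.card_union_le _ _
    have h4 : Bad.card ≤ U.card * d + d * U.card := by omega
    have h5 : U.card * d + d * U.card = 2 * d * U.card := by ring
    omega
  obtain ⟨w, hw⟩ : ∃ w : Fin n, w ∉ Bad := by
    by_contra h
    push_neg at h
    have : (Finset.univ : Finset (Fin n)) ⊆ Bad := fun w _ => h w
    have := Finset.card_le_card this
    simp at this
    omega
  have hwA : w ∉ A := fun h => hw (Finset.mem_union_left _ h)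
  have hwu : w ≠ u := fun h => hwA (h ▸ huA)
  have hwBv : w ∉ B ∪ {v} := by
    intro h
    exact hw (Finset.mem_union_right _ (Finset.mem_erase.mpr ⟨hwu, h⟩))
  have hwB : w ∉ B := fun h => hwBv (Finset.mem_union_left _ h)
  have hwv : w ≠ v := fun h => hwBv (Finset.mem_union_right _ (by simp [h]))
  -- the swapped bijection
  set f' : Fin n ≃ H := (Equiv.swap u w).trans f with hf'def
  have hswap : ∀ a, f' a = f (Equiv.swap u w a) := fun a => rfl
  have hsub : P f' ⊆ P f := by
    intro p hp
    simp only [hPdef, Finset.mem_filter, Finset.mem_univ, true_and] at hp ⊢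
    obtain ⟨hadj, hmemU⟩ := hp
    rw [hswap, hswap] at hmemU
    refine ⟨hadj, ?_⟩
    by_cases h1 : p.1 = u
    · by_cases h2 : p.2 = w
      · rw [h1, h2, Equiv.swap_apply_left, Equiv.swap_apply_right] at hmemU
        rw [h1, h2, add_comm]
        exact hmemU
      · have h2' : p.2 ≠ u := fun h => G.loopless.irrefl u (by rw [h1, h] at hadj; exact hadj)
        rw [h1, Equiv.swap_apply_left, Equiv.swap_apply_of_ne_of_ne h2' h2] at hmemU
        exact absurd (hBmem w p.2 (h1 ▸ hadj) hmemU) hwB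
    · by_cases h1' : p.1 = w
      · by_cases h2 : p.2 = u
        · rw [h1', h2, Equiv.swap_apply_right, Equiv.swap_apply_left] at hmemU
          rw [h1', h2, add_comm]
          exact hmemU
        · have h2' : p.2 ≠ w := fun h => G.loopless.irrefl w (by rw [h1', h] at hadj; exact hadj)
          rw [h1', Equiv.swap_apply_right, Equiv.swap_apply_of_ne_of_ne h2 h2'] at hmemU
          exact absurd (hAmem w p.2 (h1' ▸ hadj) hmemU) hwA
      · rw [Equiv.swap_apply_of_ne_of_ne h1 h1'] at hmemU
        by_cases h2 : p.2 = u
        · rw [h2, Equiv.swap_apply_left] at hmemU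
          exact absurd (hBmem w p.1 (h2 ▸ hadj.symm) (by rw [add_comm]; exact hmemU)) hwB
        · by_cases h2' : p.2 = w
          · rw [h2', Equiv.swap_apply_right] at hmemU
            exact absurd (hAmem w p.1 (h2' ▸ hadj.symm) (by rw [add_comm]; exact hmemU)) hwA
          · rw [Equiv.swap_apply_of_ne_of_ne h2 h2'] at hmemU
            exact hmemU
  have huvP : (u, v) ∈ P f := by
    simp only [hPdef, Finset.mem_filter, Finset.mem_univ, true_and]
    exact ⟨huv, hmem⟩
  have huvP' : (u, v) ∉ P f' := by
    simp only [hPdef, Finset.mem_filter, Finset.mem_univ, true_and]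
    rintro ⟨-, hmemU⟩
    rw [hswap, hswap, Equiv.swap_apply_left,
      Equiv.swap_apply_of_ne_of_ne (fun h => G.loopless.irrefl u (by rw [h] at huv; exact huv)) (Ne.symm hwv)] at hmemU
    exact hwB (hBmem w v huv hmemU)
  have hlt : (P f').card < (P f).card :=
    Finset.card_lt_card (Finset.ssubset_iff_of_subset hsub |>.mpr ⟨(u, v), huvP, huvP'⟩)
  exact absurd (hmin f' (Finset.mem_univ f')) (by omega)
end

section
/- For every graph G on n vertices with maximum degree at most d ≥ 1, the minimum sum-set size of G over any abelian group of order n is at most n - ⌈n/(2d)⌉ + 1. -/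
theorem stmt1 (n d : ℕ) (hd : 1 ≤ d) (G : SimpleGraph (Fin n)) [DecidableRel G.Adj]
    (hdeg : ∀ v, G.degree v ≤ d) (H : Type*) [AddCommGroup H] [Fintype H]
    (hH : Fintype.card H = n) :
    ∃ A : Fin n → H, Function.Injective A ∧
      (Set.ncard {h : H | ∃ u v, G.Adj u v ∧ A u + A v = h} : ℤ)
        ≤ (n : ℤ) - ⌈(n : ℚ) / (2 * d)⌉ + 1 := by
  classical
  have hn : 1 ≤ n := by rw [← hH]; exact Fintype.card_pos
  set c : ℤ := ⌈(n : ℚ) / (2 * d)⌉ with hc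
  have hd2 : (0:ℚ) < 2 * d := by positivity
  have hcpos : 1 ≤ c := by
    have : (0:ℤ) < c := Int.lt_ceil.mpr (by
      push_cast
      exact div_pos (by exact_mod_cast hn) hd2)
    omega
  set m : ℕ := (c - 1).toNat with hm
  have hmc : (m : ℤ) = c - 1 := Int.toNat_of_nonneg (by omega)
  have hdm : 2 * d * m + 1 ≤ n := by
    have h1 : (c : ℚ) < (n : ℚ) / (2*d) + 1 := Int.ceil_lt_add_one _
    have h2 : ((2*d*m : ℕ) : ℚ) < (n : ℚ) := by
      have hmq : (m:ℚ) = (c:ℚ) - 1 := by exact_mod_cast hmc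
      have h3 : ((c:ℚ) - 1) * (2*d) < n := (lt_div_iff₀ hd2).mp (by linarith)
      push_cast
      rw [hmq]
      linarith
    have h4 : 2*d*m < n := by exact_mod_cast h2
    omega
  have hmn : m ≤ n := by
    have : m ≤ 2*d*m := Nat.le_mul_of_pos_left m (by omega)
    omega
  obtain ⟨T, -, hT⟩ := Finset.exists_subset_card_eq (s := (Finset.univ : Finset H)) (n := m)
    (by simpa [hH] using hmn)
  -- conflict counting
  let bp : (Fin n ≃ H) → Finset (Fin n × Fin n) :=
    fun e => Finset.univ.filter (fun p => G.Adj p.1 p.2 ∧ e p.1 + e p.2 ∈ T)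
  have e0 : Fin n ≃ H := Fintype.equivOfCardEq (by simp [hH])
  have hne0 : Nonempty (Fin n ≃ H) := ⟨e0⟩
  obtain ⟨e, he⟩ : ∃ e : Fin n ≃ H, (bp e).card = sInf (Set.range fun e => (bp e).card) :=
    Nat.sInf_mem (Set.range_nonempty _)
  have hemin : ∀ e' : Fin n ≃ H, (bp e).card ≤ (bp e').card := by
    intro e'
    rw [he]
    exact Nat.sInf_le ⟨e', rfl⟩
  have hempty : bp e = ∅ := by
    by_contra hne
    obtain ⟨⟨u, v⟩, hpmem⟩ := Finset.nonempty_iff_ne_empty.mpr hne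
    simp only [bp, Finset.mem_filter, Finset.mem_univ, true_and] at hpmem
    obtain ⟨huv, hsum⟩ := hpmem
    set B1 : Finset (Fin n) := Finset.univ.filter
      (fun w => ∃ x ∈ G.neighborFinset u, e w + e x ∈ T) with hB1
    set B2 : Finset (Fin n) := Finset.univ.filter
      (fun w => ∃ x, G.Adj x w ∧ e u + e x ∈ T) with hB2
    have huB1 : u ∈ B1 := by
      simp only [hB1, Finset.mem_filter, Finset.mem_univ, true_and]
      exact ⟨v, by simp [SimpleGraph.mem_neighborFinset, huv], hsum⟩
    have huB2 : u ∈ B2 := by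
      simp only [hB2, Finset.mem_filter, Finset.mem_univ, true_and]
      exact ⟨v, huv.symm, hsum⟩
    have hB1card : B1.card ≤ d * m := by
      have hsub : B1 ⊆ (G.neighborFinset u).biUnion
          (fun x => Finset.univ.filter (fun w => e w + e x ∈ T)) := by
        intro w hw
        simp only [hB1, Finset.mem_filter, Finset.mem_univ, true_and] at hw
        obtain ⟨x, hx, hwx⟩ := hw
        exact Finset.mem_biUnion.mpr ⟨x, hx, by simp [hwx]⟩
      refine (Finset.card_le_card hsub).trans ((Finset.card_biUnion_le).trans ?_)
      have hbound : ∀ x ∈ G.neighborFinset u,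
          (Finset.univ.filter (fun w => e w + e x ∈ T)).card ≤ m := by
        intro x _
        rw [← hT]
        apply Finset.card_le_card_of_injOn (fun w => e w + e x)
        · intro w hw
          simp only [Finset.coe_filter, Set.mem_setOf_eq, Finset.mem_coe, Finset.mem_filter, Finset.mem_univ, true_and] at hw
          exact hw
        · intro a _ b _ hab
          exact e.injective (by exact add_right_cancel hab)
      calc ∑ x ∈ G.neighborFinset u,
            (Finset.univ.filter (fun w => e w + e x ∈ T)).card
          ≤ ∑ _x ∈ G.neighborFinset u, m := Finset.sum_le_sum hbound
        _ = (G.neighborFinset u).card * m := by rw [Finset.sum_const, smul_eq_mul]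
        _ ≤ d * m := by
            apply Nat.mul_le_mul_right
            rw [SimpleGraph.card_neighborFinset_eq_degree]
            exact hdeg u
    have hB2card : B2.card ≤ m * d := by
      have hsub : B2 ⊆ (Finset.univ.filter (fun x => e u + e x ∈ T)).biUnion
          (fun x => G.neighborFinset x) := by
        intro w hw
        simp only [hB2, Finset.mem_filter, Finset.mem_univ, true_and] at hw
        obtain ⟨x, hx, hwx⟩ := hw
        exact Finset.mem_biUnion.mpr ⟨x, by simp [hwx],
          by simp [SimpleGraph.mem_neighborFinset, hx]⟩
      refine (Finset.card_le_card hsub).trans ((Finset.card_biUnion_le).trans ?_)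
      have houter : (Finset.univ.filter (fun x => e u + e x ∈ T)).card ≤ m := by
        rw [← hT]
        apply Finset.card_le_card_of_injOn (fun x => e u + e x)
        · intro x hx
          simp only [Finset.coe_filter, Set.mem_setOf_eq, Finset.mem_coe, Finset.mem_filter, Finset.mem_univ, true_and] at hx
          exact hx
        · intro a _ b _ hab
          exact e.injective (by exact add_left_cancel hab)
      calc ∑ x ∈ Finset.univ.filter (fun x => e u + e x ∈ T),
            (G.neighborFinset x).card
          ≤ ∑ _x ∈ Finset.univ.filter (fun x => e u + e x ∈ T), d := by
            apply Finset.sum_le_sum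
            intro x _
            rw [SimpleGraph.card_neighborFinset_eq_degree]
            exact hdeg x
        _ = (Finset.univ.filter (fun x => e u + e x ∈ T)).card * d := by
            rw [Finset.sum_const, smul_eq_mul]
        _ ≤ m * d := Nat.mul_le_mul_right d houter
    -- find a good vertex w
    have hucard : (B1 ∪ B2 ∪ {v}).card < n := by
      have h1 : B1 ∪ B2 ⊆ B1 ∪ (B2.erase u) := by
        intro x hx
        rcases Finset.mem_union.mp hx with h | h
        · exact Finset.mem_union_left _ h
        · by_cases hxu : x = u
          · exact Finset.mem_union_left _ (hxu ▸ huB1)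
          · exact Finset.mem_union_right _ (Finset.mem_erase.mpr ⟨hxu, h⟩)
      have h2 : (B1 ∪ B2).card ≤ B1.card + (B2.card - 1) := by
        refine (Finset.card_le_card h1).trans ?_
        refine (Finset.card_union_le _ _).trans ?_
        have : (B2.erase u).card = B2.card - 1 := Finset.card_erase_of_mem huB2
        omega
      have h3 : (B1 ∪ B2 ∪ {v}).card ≤ (B1 ∪ B2).card + 1 := by
        refine (Finset.card_union_le _ _).trans ?_
        simp
      have hB2pos : 1 ≤ B2.card := Finset.card_pos.mpr ⟨u, huB2⟩
      have hcomm : d * m = m * d := Nat.mul_comm d m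
      have hdm2 : d * m + d * m + 1 ≤ n := by
        have : 2 * d * m = d * m + d * m := by ring
        omega
      omega
    obtain ⟨w, hw⟩ : ∃ w : Fin n, w ∉ B1 ∪ B2 ∪ {v} := by
      by_contra hcon
      push_neg at hcon
      have hsub : (Finset.univ : Finset (Fin n)) ⊆ B1 ∪ B2 ∪ {v} := fun x _ => hcon x
      have := Finset.card_le_card hsub
      simp only [Finset.card_univ, Fintype.card_fin] at this
      omega
    have hwB1 : w ∉ B1 := fun h => hw (by simp [Finset.mem_union, h])
    have hwB2 : w ∉ B2 := fun h => hw (by simp [Finset.mem_union, h])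
    have hwv : w ≠ v := fun h => hw (by simp [Finset.mem_union, h])
    have hwu : w ≠ u := fun h => hwB1 (h ▸ huB1)
    set e' : Fin n ≃ H := (Equiv.swap u w).trans e with he'
    have he'u : e' u = e w := by simp [he', Equiv.swap_apply_left]
    have he'w : e' w = e u := by simp [he', Equiv.swap_apply_right]
    have he'o : ∀ x : Fin n, x ≠ u → x ≠ w → e' x = e x := by
      intro x hxu hxw
      simp [he', Equiv.swap_apply_of_ne_of_ne hxu hxw]
    have hsubbp : bp e' ⊆ (bp e).erase (u, v) := by
      rintro ⟨a, b⟩ hab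
      simp only [bp, Finset.mem_filter, Finset.mem_univ, true_and] at hab
      obtain ⟨hadj, hsum'⟩ := hab
      have hne_ab : a ≠ b := G.ne_of_adj hadj
      rw [Finset.mem_erase]
      by_cases hau : a = u
      · subst hau
        by_cases hbw : b = w
        · subst hbw
          rw [he'u, he'w] at hsum'
          refine ⟨by simp [Prod.ext_iff, hwv], ?_⟩
          simp only [bp, Finset.mem_filter, Finset.mem_univ, true_and]
          exact ⟨hadj, by rwa [add_comm] at hsum'⟩
        · exfalso
          apply hwB1
          simp only [hB1, Finset.mem_filter, Finset.mem_univ, true_and]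
          have hbu : b ≠ a := hne_ab.symm
          rw [he'u, he'o b hbu hbw] at hsum'
          exact ⟨b, by simp [SimpleGraph.mem_neighborFinset, hadj], hsum'⟩
      · by_cases haw : a = w
        · subst haw
          by_cases hbu : b = u
          · subst hbu
            rw [he'u, he'w] at hsum'
            constructor
            · simp [Prod.ext_iff]
              intro h; exact absurd h hwu
            · simp only [bp, Finset.mem_filter, Finset.mem_univ, true_and]
              exact ⟨hadj, by rwa [add_comm] at hsum'⟩
          · exfalso
            apply hwB2
            simp only [hB2, Finset.mem_filter, Finset.mem_univ, true_and]
            rw [he'w, he'o b hbu hne_ab.symm] at hsum'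
            exact ⟨b, hadj.symm, hsum'⟩
        · -- a ∉ {u, w}
          by_cases hbu : b = u
          · subst hbu
            exfalso
            apply hwB1
            simp only [hB1, Finset.mem_filter, Finset.mem_univ, true_and]
            rw [he'u, he'o a hau haw] at hsum'
            exact ⟨a, by simp [SimpleGraph.mem_neighborFinset, hadj.symm],
              by rwa [add_comm] at hsum'⟩
          · by_cases hbw : b = w
            · subst hbw
              exfalso
              apply hwB2
              simp only [hB2, Finset.mem_filter, Finset.mem_univ, true_and]
              rw [he'w, he'o a hau haw] at hsum'
              exact ⟨a, hadj, by rwa [add_comm] at hsum'⟩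
            · rw [he'o a hau haw, he'o b hbu hbw] at hsum'
              refine ⟨?_, ?_⟩
              · simp [Prod.ext_iff]; intro h; exact absurd h hau
              · simp only [bp, Finset.mem_filter, Finset.mem_univ, true_and]
                exact ⟨hadj, hsum'⟩
    have hlt : (bp e').card < (bp e).card := by
      have h1 : (bp e').card ≤ ((bp e).erase (u, v)).card := Finset.card_le_card hsubbp
      have h2 : ((bp e).erase (u, v)).card = (bp e).card - 1 :=
        Finset.card_erase_of_mem (by
          simp only [bp, Finset.mem_filter, Finset.mem_univ, true_and]
          exact ⟨huv, hsum⟩)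
      have h3 : 1 ≤ (bp e).card := Finset.card_pos.mpr ⟨(u, v), by
        simp only [bp, Finset.mem_filter, Finset.mem_univ, true_and]
        exact ⟨huv, hsum⟩⟩
      omega
    exact absurd (hemin e') (by omega)
  -- conclusion
  refine ⟨e, e.injective, ?_⟩
  have hsubset : {h : H | ∃ u v, G.Adj u v ∧ e u + e v = h} ⊆ (↑(Tᶜ) : Set H) := by
    rintro h ⟨u, v, huv, hsum⟩
    simp only [Finset.coe_compl, Set.mem_compl_iff, Finset.mem_coe]
    intro hmem
    have : (u, v) ∈ bp e := by
      simp only [bp, Finset.mem_filter, Finset.mem_univ, true_and]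
      exact ⟨huv, hsum ▸ hmem⟩
    rw [hempty] at this
    exact absurd this (Finset.notMem_empty _)
  have hcard1 : Set.ncard {h : H | ∃ u v, G.Adj u v ∧ e u + e v = h} ≤ (Tᶜ : Finset H).card := by
    have := Set.ncard_le_ncard hsubset (Set.toFinite _)
    rwa [Set.ncard_coe_finset] at this
  have hcard2 : (Tᶜ : Finset H).card = n - m := by
    rw [Finset.card_compl, hT, hH]
  rw [hcard2] at hcard1
  have hfin : (Set.ncard {h : H | ∃ u v, G.Adj u v ∧ e u + e v = h} : ℤ) ≤ ((n - m : ℕ) : ℤ) := by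
    exact_mod_cast hcard1
  rw [Nat.cast_sub hmn] at hfin
  omega
end

section
/- Let G be a connected graph on vertex set [n] with diameter less than D ≥ 1, H an abelian group, and A : [n] → H an injection with A(1) = 0. Write the edge sum-set A(E(G)) = {a₁,…,a_k}. Then there exist m = |E(G)| - (n-1) vectors f₁,…,f_m ∈ ℤ^k with |f_t|₁ ≤ 3D for all t, and an injection Ã : [n] → ℤ^k / Span_ℤ(f₁,…,f_m), such that every edge sum Ã(u)+Ã(v) over edges {u,v} of G lies in the image of the standard basis {e₁,…,e_k} under the quotient map π : ℤ^k → ℤ^k/Span_ℤ(f₁,…,f_m). -/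
section aux
variable {V : Type*} {k : ℕ}

lemma aux_exists_parent {G : SimpleGraph V} (hconn : G.Connected) {r v : V} (hv : v ≠ r) :
    ∃ u, G.Adj u v ∧ G.dist r u + 1 = G.dist r v := by
  obtain ⟨p, hp⟩ := hconn.exists_walk_length_eq_dist r v
  cases hq : p.reverse with
  | nil => exact absurd rfl hv
  | @cons _ u _ h q =>
      refine ⟨u, h.symm, ?_⟩
      have hlen : q.length + 1 = G.dist r v := by
        have := congrArg SimpleGraph.Walk.length hq
        simpa [Nat.add_comm, hp] using this.symm
      have h1 : G.dist r u ≤ q.length := by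
        simpa using G.dist_le q.reverse
      have h2 : G.dist r v ≤ G.dist r u + 1 := by
        obtain ⟨w, hw⟩ := hconn.exists_walk_length_eq_dist r u
        have := G.dist_le (w.concat h.symm)
        simpa [SimpleGraph.Walk.length_concat, hw] using this
      omega

open Classical in
noncomputable def myparent (G : SimpleGraph V) (r v : V) : V :=
  if h : ∃ u, G.Adj u v ∧ G.dist r u + 1 = G.dist r v then h.choose else v

lemma myparent_spec {G : SimpleGraph V} (hconn : G.Connected) {r v : V} (hv : v ≠ r) :
    G.Adj (myparent G r v) v ∧ G.dist r (myparent G r v) + 1 = G.dist r v := by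
  have h := aux_exists_parent hconn hv
  rw [myparent, dif_pos h]
  exact h.choose_spec

noncomputable def myAt (G : SimpleGraph V) (r : V) (c : V → V → Fin k) (v : V) : Fin k → ℤ :=
  if h : G.dist r (myparent G r v) < G.dist r v then
    Pi.single (c (myparent G r v) v) 1 - myAt G r c (myparent G r v)
  else 0
termination_by G.dist r v
decreasing_by exact h

lemma myAt_root (G : SimpleGraph V) (r : V) (c : V → V → Fin k) : myAt G r c r = 0 := by
  rw [myAt, dif_neg]
  simp [SimpleGraph.dist_self]

lemma myAt_step {G : SimpleGraph V} (r : V) (c : V → V → Fin k) {v : V}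
    (h : G.dist r (myparent G r v) < G.dist r v) :
    myAt G r c v = Pi.single (c (myparent G r v) v) 1 - myAt G r c (myparent G r v) := by
  rw [myAt, dif_pos h]

open Classical in
noncomputable def cIdx {H : Type*} [AddCommGroup H] {n : ℕ} (F : Finset H) (hF : F.card = k)
    (hk : 0 < k) (A : Fin n → H) (u v : Fin n) : Fin k :=
  if h : A u + A v ∈ F then Fin.cast hF (F.equivFin ⟨A u + A v, h⟩) else ⟨0, hk⟩

noncomputable def sVal {H : Type*} [AddCommGroup H] (F : Finset H) (hF : F.card = k)
    (i : Fin k) : H := (F.equivFin.symm (Fin.cast hF.symm i) : H)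

lemma cIdx_symm {H : Type*} [AddCommGroup H] {n : ℕ} (F : Finset H) (hF : F.card = k)
    (hk : 0 < k) (A : Fin n → H) (u v : Fin n) :
    cIdx F hF hk A u v = cIdx F hF hk A v u := by
  classical
  rw [cIdx, cIdx]
  refine dite_congr (by rw [add_comm]) (fun h => ?_) (fun h => rfl)
  exact congrArg (Fin.cast hF) (congrArg F.equivFin (Subtype.ext (add_comm _ _)))

lemma sVal_cIdx {H : Type*} [AddCommGroup H] {n : ℕ} (F : Finset H) (hF : F.card = k)
    (hk : 0 < k) (A : Fin n → H) {u v : Fin n} (h : A u + A v ∈ F) :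
    sVal F hF (cIdx F hF hk A u v) = A u + A v := by
  rw [cIdx, dif_pos h, sVal]
  have : Fin.cast hF.symm (Fin.cast hF (F.equivFin ⟨A u + A v, h⟩)) = F.equivFin ⟨A u + A v, h⟩ := by
    ext; simp
  rw [this, Equiv.symm_apply_apply]


noncomputable def relSym {V : Type*} {k : ℕ} (c : V → V → Fin k)
    (hsym : ∀ u v, c u v = c v u) (At : V → Fin k → ℤ) : Sym2 V → (Fin k → ℤ) :=
  Sym2.lift ⟨fun u v => Pi.single (c u v) 1 - At u - At v, fun u v => by
    show Pi.single (c u v) 1 - At u - At v = Pi.single (c v u) 1 - At v - At u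
    rw [hsym u v]; abel⟩

lemma relSym_apply {V : Type*} {k : ℕ} (c : V → V → Fin k)
    (hsym : ∀ u v, c u v = c v u) (At : V → Fin k → ℤ) (u v : V) :
    relSym c hsym At s(u, v) = Pi.single (c u v) 1 - At u - At v := rfl

lemma sum_abs_single {k : ℕ} (j : Fin k) : (∑ i, |(Pi.single j 1 : Fin k → ℤ) i|) = 1 := by
  simp [Pi.single_apply, apply_ite abs]

lemma norm_single_sub {k : ℕ} (j : Fin k) (x : Fin k → ℤ) :
    (∑ i, |(Pi.single j 1 : Fin k → ℤ) i - x i|) ≤ 1 + ∑ i, |x i| := by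
  calc (∑ i, |(Pi.single j 1 : Fin k → ℤ) i - x i|) ≤ ∑ i, (|(Pi.single j 1 : Fin k → ℤ) i| + |x i|) :=
        Finset.sum_le_sum fun i _ => abs_sub _ _
    _ = (∑ i, |(Pi.single j 1 : Fin k → ℤ) i|) + ∑ i, |x i| := Finset.sum_add_distrib
    _ = 1 + ∑ i, |x i| := by rw [sum_abs_single]

lemma norm_single_sub2 {k : ℕ} (j : Fin k) (x y : Fin k → ℤ) :
    (∑ i, |(Pi.single j 1 : Fin k → ℤ) i - x i - y i|) ≤ 1 + (∑ i, |x i|) + ∑ i, |y i| := by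
  calc (∑ i, |(Pi.single j 1 : Fin k → ℤ) i - x i - y i|)
      ≤ ∑ i, (|(Pi.single j 1 : Fin k → ℤ) i - x i| + |y i|) :=
        Finset.sum_le_sum fun i _ => abs_sub _ _
    _ = (∑ i, |(Pi.single j 1 : Fin k → ℤ) i - x i|) + ∑ i, |y i| := Finset.sum_add_distrib
    _ ≤ (1 + ∑ i, |x i|) + ∑ i, |y i| := by
        have := norm_single_sub j x
        linarith

end aux
set_option maxHeartbeats 1000000 in
theorem stmt7 (n D k : ℕ) (hn : 0 < n) (hD : 1 ≤ D) (G : SimpleGraph (Fin n))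
    [DecidableRel G.Adj] (hconn : G.Connected) (hdiam : ∀ u v, G.dist u v < D)
    (H : Type*) [AddCommGroup H] (A : Fin n → H) (hA : Function.Injective A)
    (hA1 : A ⟨0, hn⟩ = 0)
    (hk : Set.ncard {h : H | ∃ u v, G.Adj u v ∧ A u + A v = h} = k) :
    ∃ f : Fin (G.edgeFinset.card - (n - 1)) → (Fin k → ℤ),
      (∀ t, ∑ i, |f t i| ≤ 3 * (D : ℤ)) ∧
      ∃ A2 : Fin n → ((Fin k → ℤ) ⧸ Submodule.span ℤ (Set.range f)),
        Function.Injective A2 ∧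
        ∀ u v, G.Adj u v → ∃ i : Fin k,
          A2 u + A2 v = Submodule.Quotient.mk (Pi.single i 1) := by
  classical
  by_cases hE : ∃ a b, G.Adj a b
  swap
  · -- no edges: n = 1
    refine ⟨fun _ => 0, fun t => by simp, fun _ => 0, ?_, ?_⟩
    · intro a b _
      obtain ⟨w⟩ := hconn a b
      cases w with
      | nil => rfl
      | cons h _ => exact absurd ⟨_, _, h⟩ hE
    · intro u v huv
      exact absurd ⟨u, v, huv⟩ hE
  -- main case
  set r : Fin n := ⟨0, hn⟩ with hr
  set S : Set H := {h : H | ∃ u v, G.Adj u v ∧ A u + A v = h} with hS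
  have hfin : S.Finite := by
    apply Set.Finite.subset (Set.finite_range (fun p : Fin n × Fin n => A p.1 + A p.2))
    rintro h ⟨u, v, _, rfl⟩
    exact ⟨(u, v), rfl⟩
  set F : Finset H := hfin.toFinset with hFdef
  have hF : F.card = k := by
    rw [← hk, hFdef]
    exact (Set.ncard_eq_toFinset_card S hfin).symm
  have hk0 : 0 < k := by
    obtain ⟨a, b, hab⟩ := hE
    have : A a + A b ∈ F := hfin.mem_toFinset.mpr ⟨a, b, hab, rfl⟩
    rw [← hF]
    exact Finset.card_pos.mpr ⟨_, this⟩
  set c : Fin n → Fin n → Fin k := cIdx F hF hk0 A with hc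
  set val : Fin k → H := sVal F hF with hval
  set At : Fin n → (Fin k → ℤ) := myAt G r c with hAt
  set ψ : (Fin k → ℤ) →ₗ[ℤ] H := Fintype.linearCombination ℤ val with hψ
  have hψsingle : ∀ i : Fin k, ψ (Pi.single i 1) = val i := by
    intro i
    rw [hψ, Fintype.linearCombination_apply_single, one_smul]
  have hmemF : ∀ {u v : Fin n}, G.Adj u v → A u + A v ∈ F := by
    intro u v huv
    exact hfin.mem_toFinset.mpr ⟨u, v, huv, rfl⟩
  have hvalc : ∀ {u v : Fin n}, G.Adj u v → val (c u v) = A u + A v := by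
    intro u v huv
    exact sVal_cIdx F hF hk0 A (hmemF huv)
  have hpar : ∀ v : Fin n, v ≠ r →
      G.Adj (myparent G r v) v ∧ G.dist r (myparent G r v) + 1 = G.dist r v :=
    fun v hv => myparent_spec hconn hv
  -- key induction
  have key : ∀ N : ℕ, ∀ v : Fin n, G.dist r v ≤ N →
      ψ (At v) = A v ∧ (∑ i, |At v i|) ≤ (G.dist r v : ℤ) := by
    intro N
    induction N with
    | zero =>
        intro v hv
        have hv0 : G.dist r v = 0 := Nat.le_zero.mp hv
        have hvr : v = r := (hconn.dist_eq_zero_iff.mp hv0).symm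
        subst hvr
        rw [hAt, myAt_root]
        simp [hA1, hr]
        exact hA1.symm
    | succ N ih =>
        intro v hv
        by_cases hvr : v = r
        · subst hvr
          rw [hAt, myAt_root]
          simp [hA1, hr]
          exact hA1.symm
        · obtain ⟨hadj, hdist⟩ := hpar v hvr
          have hlt : G.dist r (myparent G r v) < G.dist r v := by omega
          have hle : G.dist r (myparent G r v) ≤ N := by omega
          obtain ⟨ih1, ih2⟩ := ih (myparent G r v) hle
          have hstep : At v = Pi.single (c (myparent G r v) v) 1 - At (myparent G r v) := by
            rw [hAt]; exact myAt_step r c hlt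
          constructor
          · rw [hstep, map_sub, hψsingle, ih1, hvalc hadj]
            abel
          · have hb := norm_single_sub (c (myparent G r v) v) (At (myparent G r v))
            have hcast : ((G.dist r (myparent G r v) : ℤ)) + 1 = (G.dist r v : ℤ) := by
              exact_mod_cast hdist
            rw [hstep]
            simp only [Pi.sub_apply]
            linarith
  have keyψ : ∀ v : Fin n, ψ (At v) = A v := fun v => (key (G.dist r v) v le_rfl).1
  have keynorm : ∀ v : Fin n, (∑ i, |At v i|) ≤ (G.dist r v : ℤ) :=
    fun v => (key (G.dist r v) v le_rfl).2
  -- the tree edges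
  set T : Finset (Sym2 (Fin n)) :=
    (Finset.univ.erase r).image (fun v => s(myparent G r v, v)) with hT
  have hTE : T ⊆ G.edgeFinset := by
    intro e he
    rw [hT, Finset.mem_image] at he
    obtain ⟨v, hv, rfl⟩ := he
    have hvr := Finset.ne_of_mem_erase hv
    rw [SimpleGraph.mem_edgeFinset]
    exact (hpar v hvr).1
  have hTcard : T.card = n - 1 := by
    rw [hT, Finset.card_image_of_injOn, Finset.card_erase_of_mem (Finset.mem_univ r),
      Finset.card_univ, Fintype.card_fin]
    intro a ha b hb hab
    have har := Finset.ne_of_mem_erase ha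
    have hbr := Finset.ne_of_mem_erase hb
    have hda := (hpar a har).2
    have hdb := (hpar b hbr).2
    rw [Sym2.eq_iff] at hab
    rcases hab with ⟨h1, h2⟩ | ⟨h1, h2⟩
    · exact h2
    · rw [← h2] at hdb
      rw [← h1] at hdb
      exfalso
      omega
  set NT : Finset (Sym2 (Fin n)) := G.edgeFinset \ T with hNTdef
  have hNT : NT.card = G.edgeFinset.card - (n - 1) := by
    rw [hNTdef, Finset.card_sdiff_of_subset hTE, hTcard]
  -- relation vectors
  have hcsym : ∀ u v : Fin n, c u v = c v u := cIdx_symm F hF hk0 A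
  set relS : Sym2 (Fin n) → (Fin k → ℤ) := relSym c hcsym At with hrelS
  have hrelS_apply : ∀ u v : Fin n, relS s(u, v) = Pi.single (c u v) 1 - At u - At v :=
    relSym_apply c hcsym At
  have hub : ∀ e ∈ G.edgeFinset, (∑ i, |relS e i|) ≤ 3 * (D : ℤ) := by
    intro e heE
    induction e using Sym2.inductionOn with
    | hf u v =>
      have hadj : G.Adj u v := (SimpleGraph.mem_edgeSet G).mp (SimpleGraph.mem_edgeFinset.mp heE)
      have hb := norm_single_sub2 (c u v) (At u) (At v)
      have h1 := keynorm u
      have h2 := keynorm v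
      have hu : (G.dist r u : ℤ) ≤ (D : ℤ) - 1 := by
        have := hdiam r u
        omega
      have hv : (G.dist r v : ℤ) ≤ (D : ℤ) - 1 := by
        have := hdiam r v
        omega
      have hD' : (1 : ℤ) ≤ (D : ℤ) := by exact_mod_cast hD
      rw [hrelS_apply]
      simp only [Pi.sub_apply]
      linarith
  have hψrel : ∀ e ∈ G.edgeFinset, ψ (relS e) = 0 := by
    intro e heE
    induction e using Sym2.inductionOn with
    | hf u v =>
      have hadj : G.Adj u v := (SimpleGraph.mem_edgeSet G).mp (SimpleGraph.mem_edgeFinset.mp heE)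
      rw [hrelS_apply, map_sub, map_sub, hψsingle, keyψ, keyψ, hvalc hadj]
      abel
  refine ⟨fun t => relS ((NT.equivFin.symm (Fin.cast hNT.symm t)) : Sym2 (Fin n)), ?_, ?_⟩
  · -- norm bound
    intro t
    exact hub _ (Finset.mem_sdiff.mp (NT.equivFin.symm (Fin.cast hNT.symm t)).2).1
  · -- the quotient map
    set f : Fin (G.edgeFinset.card - (n - 1)) → (Fin k → ℤ) :=
      fun t => relS ((NT.equivFin.symm (Fin.cast hNT.symm t)) : Sym2 (Fin n)) with hf
    set Q := Submodule.span ℤ (Set.range f) with hQ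
    have hrelmem : ∀ u v : Fin n, G.Adj u v → relS s(u, v) ∈ Q := by
      intro u v huv
      by_cases hT' : s(u, v) ∈ T
      · -- tree edge: relS = 0
        rw [hT, Finset.mem_image] at hT'
        obtain ⟨w, hw, hew⟩ := hT'
        have hwr := Finset.ne_of_mem_erase hw
        obtain ⟨hadj, hdist⟩ := hpar w hwr
        have hlt : G.dist r (myparent G r w) < G.dist r w := by omega
        have hstep : At w = Pi.single (c (myparent G r w) w) 1 - At (myparent G r w) := by
          rw [hAt]; exact myAt_step r c hlt
        have : relS s(u, v) = 0 := by
          rw [← hew, hrelS_apply, hstep]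
          abel
        rw [this]
        exact Submodule.zero_mem Q
      · -- non-tree edge: generator
        have heNT : s(u, v) ∈ NT := Finset.mem_sdiff.mpr ⟨SimpleGraph.mem_edgeFinset.mpr huv, hT'⟩
        apply Submodule.subset_span
        refine ⟨Fin.cast hNT (NT.equivFin ⟨s(u, v), heNT⟩), ?_⟩
        exact congrArg (fun y : {x // x ∈ NT} => relS ↑y)
          (Equiv.symm_apply_apply NT.equivFin ⟨s(u, v), heNT⟩)
    have hψker : Q ≤ LinearMap.ker ψ := by
      rw [hQ, Submodule.span_le]
      rintro _ ⟨t, rfl⟩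
      rw [SetLike.mem_coe, LinearMap.mem_ker, hf]
      exact hψrel _ (Finset.mem_sdiff.mp (NT.equivFin.symm (Fin.cast hNT.symm t)).2).1
    refine ⟨fun v => Submodule.Quotient.mk (At v), ?_, ?_⟩
    · intro a b hab
      rw [Submodule.Quotient.eq] at hab
      have : ψ (At a - At b) = 0 := hψker hab
      rw [map_sub, keyψ, keyψ, sub_eq_zero] at this
      exact hA this
    · intro u v huv
      refine ⟨c u v, ?_⟩
      rw [← Submodule.Quotient.mk_add, Submodule.Quotient.eq]
      have h0 : At u + At v - Pi.single (c u v) 1 = -(Pi.single (c u v) 1 - At u - At v) := by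
        abel
      rw [h0, ← hrelS_apply]
      exact Submodule.neg_mem Q (hrelmem u v huv)
end

section
/- Let G be a graph on n vertices and k ≥ 3 an odd integer. If G contains μ_k cycles of length k, then for every injection A : V(G) → ℤ, the number of distinct edge sums |{A(u)+A(v) : {u,v} ∈ E(G)}| is at least μ_k^{1/k}. -/
open SimpleGraph

namespace Stmt11Aux

/-- alternating sum of a list of integers -/
def altsum : List ℤ → ℤ
  | [] => 0
  | a :: l => a - altsum l

/-- consecutive sums of a list -/
def csums (l : List ℤ) : List ℤ := List.zipWith (· + ·) l l.tail

@[simp] lemma csums_nil : csums [] = [] := rfl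
@[simp] lemma csums_single (a : ℤ) : csums [a] = [] := rfl
@[simp] lemma csums_cons (a b : ℤ) (l : List ℤ) :
    csums (a :: b :: l) = (a + b) :: csums (b :: l) := rfl

lemma altsum_csums' : ∀ (l : List ℤ) (a b : ℤ),
    altsum (csums (a :: (l ++ [b]))) = a - (-1) ^ (l.length + 1) * b := by
  intro l
  induction l with
  | nil => intro a b; simp [altsum]
  | cons c t ih =>
    intro a b
    rw [List.cons_append, csums_cons]
    show (a + c) - altsum (csums (c :: (t ++ [b]))) = _
    rw [ih c b]
    simp only [List.length_cons]
    ring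

lemma csums_inj : ∀ (l₁ l₂ : List ℤ), csums l₁ = csums l₂ → l₁.length = l₂.length →
    l₁.head? = l₂.head? → l₁ = l₂ := by
  intro l₁
  induction l₁ with
  | nil => intro l₂ _ hlen _; cases l₂ <;> simp_all
  | cons a t ih =>
    intro l₂ hcs hlen hhd
    cases l₂ with
    | nil => simp at hlen
    | cons b s =>
      have hab : a = b := by simpa using hhd
      subst hab
      cases t with
      | nil => cases s <;> simp_all
      | cons c r =>
        cases s with
        | nil => simp at hlen
        | cons d q =>
          rw [csums_cons, csums_cons] at hcs
          have h1 : a + c = a + d := (List.cons_eq_cons.mp hcs).1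
          have hcd : c = d := by omega
          subst hcd
          have h2 : csums (c :: r) = csums (c :: q) := (List.cons_eq_cons.mp hcs).2
          have := ih (c :: q) h2 (by simpa using hlen) rfl
          rw [this]

variable {α : Type*} {G : SimpleGraph α}

/-- edge sum function -/
def esum (A : α → ℤ) : Sym2 α → ℤ :=
  Sym2.lift ⟨fun x y => A x + A y, fun x y => by ring⟩

@[simp] lemma esum_mk (A : α → ℤ) (x y : α) : esum A s(x, y) = A x + A y := rfl

lemma walk_edges_map (A : α → ℤ) : ∀ {u v : α} (w : G.Walk u v),
    w.edges.map (esum A) = csums (w.support.map A) := by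
  intro u v w
  induction w with
  | nil => simp [csums]
  | @cons u x v h p ih =>
    rw [Walk.edges_cons, Walk.support_cons, List.map_cons, List.map_cons]
    rw [p.support_eq_cons] at ih ⊢
    rw [List.map_cons] at ih ⊢
    rw [csums_cons, ← ih, esum_mk]

lemma walk_edges_eq : ∀ {u v : α} (w : G.Walk u v),
    w.edges = List.zipWith (fun a b => s(a, b)) w.support w.support.tail := by
  intro u v w
  induction w with
  | nil => simp
  | @cons u x v h p ih =>
    rw [Walk.edges_cons, Walk.support_cons]
    rw [p.support_eq_cons] at ih ⊢
    rw [ih]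
    rfl

lemma altsum_walk (A : α → ℤ) {v : α} (w : G.Walk v v)
    (hodd : Odd w.length) (hpos : 0 < w.length) :
    altsum (w.edges.map (esum A)) = 2 * A v := by
  rw [walk_edges_map]
  obtain ⟨t, hsup⟩ : ∃ t, w.support = v :: t := ⟨_, w.support_eq_cons⟩
  have htlen : t.length = w.length := by
    have h1 := w.length_support
    rw [hsup] at h1
    simp at h1
    omega
  have ht : t ≠ [] := by
    intro h; rw [h] at htlen; simp at htlen; omega
  have hlast : t.getLast ht = v := by
    have h1 : w.support.getLast? = some v := by
      rw [List.getLast?_eq_getLast (l := w.support) (by simp)]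
      exact congrArg some w.getLast_support
    rw [hsup, List.getLast?_cons, List.getLast?_eq_getLast ht] at h1
    simpa using h1
  have hdecomp : t = t.dropLast ++ [v] := by
    conv_lhs => rw [← List.dropLast_append_getLast ht]
    rw [hlast]
  have hmap : w.support.map A = A v :: ((t.dropLast.map A) ++ [A v]) := by
    conv_lhs => rw [hsup, hdecomp]
    simp
  rw [hmap, altsum_csums']
  have hdl : t.dropLast.length = w.length - 1 := by
    rw [List.length_dropLast, htlen]
  have hpow : ((-1 : ℤ)) ^ ((t.dropLast.map A).length + 1) = -1 := by
    rw [List.length_map, hdl]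
    have : w.length - 1 + 1 = w.length := by omega
    rw [this, Odd.neg_one_pow hodd]
  rw [hpow]
  ring

/-- key reconstruction lemma: two closed odd walks with the same edge-sum sequence
have the same edges. -/
lemma cycle_reconstruct (A : α → ℤ) (hA : Function.Injective A)
    {k : ℕ} (hk : 3 ≤ k) (hodd : Odd k) {v₁ v₂ : α}
    (w₁ : G.Walk v₁ v₁) (w₂ : G.Walk v₂ v₂)
    (h₁ : w₁.length = k) (h₂ : w₂.length = k)
    (hs : w₁.edges.map (esum A) = w₂.edges.map (esum A)) : w₁.edges = w₂.edges := by
  have hpos₁ : 0 < w₁.length := by omega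
  have hpos₂ : 0 < w₂.length := by omega
  have halt : 2 * A v₁ = 2 * A v₂ := by
    rw [← altsum_walk A w₁ (h₁ ▸ hodd) hpos₁, ← altsum_walk A w₂ (h₂ ▸ hodd) hpos₂, hs]
  have hv : A v₁ = A v₂ := by omega
  rw [walk_edges_map, walk_edges_map] at hs
  have hsup₁ : w₁.support = v₁ :: w₁.support.tail := w₁.support_eq_cons
  have hsup₂ : w₂.support = v₂ :: w₂.support.tail := w₂.support_eq_cons
  have htlen₁ : w₁.support.tail.length = k := by
    have := w₁.length_support
    have : w₁.support.length = w₁.support.tail.length + 1 := by rw [hsup₁]; simp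
    omega
  have htlen₂ : w₂.support.tail.length = k := by
    have := w₂.length_support
    have : w₂.support.length = w₂.support.tail.length + 1 := by rw [hsup₂]; simp
    omega
  have hlens : (w₁.support.map A).length = (w₂.support.map A).length := by
    rw [List.length_map, List.length_map, hsup₁, hsup₂]
    simp [htlen₁, htlen₂]; omega
  have hheads : (w₁.support.map A).head? = (w₂.support.map A).head? := by
    rw [hsup₁, hsup₂, List.map_cons, List.map_cons]
    simp [hv]
  have hmapeq := csums_inj _ _ hs hlens hheads
  have hsupeq : w₁.support = w₂.support := (List.map_injective_iff.mpr hA) hmapeq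
  rw [walk_edges_eq w₁, walk_edges_eq w₂, hsupeq]

end Stmt11Aux

open Stmt11Aux

theorem stmt11 (n k : ℕ) (hk : 3 ≤ k) (hodd : Odd k)
    (G : SimpleGraph (Fin n)) (μ : ℕ)
    (hμ : μ = Set.ncard {s : Finset (Sym2 (Fin n)) | ∃ (v : Fin n) (w : G.Walk v v),
        w.IsCycle ∧ w.length = k ∧ s = w.edges.toFinset})
    (A : Fin n → ℤ) (hA : Function.Injective A) :
    (μ : ℝ) ^ ((1 : ℝ) / k)
      ≤ Set.ncard {s : ℤ | ∃ u v, G.Adj u v ∧ A u + A v = s} := by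
  classical
  set T : Set ℤ := {s : ℤ | ∃ u v, G.Adj u v ∧ A u + A v = s} with hTdef
  set C : Set (Finset (Sym2 (Fin n))) := {s : Finset (Sym2 (Fin n)) |
      ∃ (v : Fin n) (w : G.Walk v v),
        w.IsCycle ∧ w.length = k ∧ s = w.edges.toFinset} with hCdef
  have hTfin : T.Finite := by
    apply Set.Finite.subset (Set.finite_range (fun p : Fin n × Fin n => A p.1 + A p.2))
    rintro x ⟨u, v, _, rfl⟩
    exact ⟨(u, v), rfl⟩
  haveI : Finite T := hTfin
  have exW : ∀ s ∈ C, ∃ (v : Fin n) (w : G.Walk v v),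
      w.IsCycle ∧ w.length = k ∧ s = w.edges.toFinset := fun s hs => hs
  choose vtx wlk hcyc hlen hedg using exW
  have hElen : ∀ s (hs : s ∈ C), ((wlk s hs).edges.map (esum A)).length = k := by
    intro s hs
    rw [List.length_map, Walk.length_edges, hlen]
  have hmemT : ∀ s (hs : s ∈ C) (i : Fin k),
      ((wlk s hs).edges.map (esum A)).getD i 0 ∈ T := by
    intro s hs i
    have hi : (i : ℕ) < ((wlk s hs).edges.map (esum A)).length := by
      rw [hElen s hs]; exact i.2
    rw [List.getD_eq_getElem _ _ hi]
    have hmem := List.getElem_mem hi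
    obtain ⟨e, he, heq⟩ := List.mem_map.mp hmem
    have : e ∈ G.edgeSet := (wlk s hs).edges_subset_edgeSet he
    induction e with
    | h x y => exact ⟨x, y, this, heq⟩
  set f : ↥C → (Fin k → ↥T) := fun s i =>
    ⟨((wlk s.1 s.2).edges.map (esum A)).getD i 0, hmemT s.1 s.2 i⟩ with hfdef
  have hfinj : Function.Injective f := by
    rintro ⟨s₁, hs₁⟩ ⟨s₂, hs₂⟩ hfs
    have hLeq : (wlk s₁ hs₁).edges.map (esum A) = (wlk s₂ hs₂).edges.map (esum A) := by
      apply List.ext_getElem (by rw [hElen, hElen])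
      intro i h₁ h₂
      have hik : i < k := by rwa [hElen] at h₁
      have h : ((wlk s₁ hs₁).edges.map (esum A)).getD i 0
          = ((wlk s₂ hs₂).edges.map (esum A)).getD i 0 :=
        Subtype.ext_iff.mp (congrFun hfs ⟨i, hik⟩)
      rwa [List.getD_eq_getElem _ _ h₁, List.getD_eq_getElem _ _ h₂] at h
    have hedgeq : (wlk s₁ hs₁).edges = (wlk s₂ hs₂).edges :=
      cycle_reconstruct A hA hk hodd _ _ (hlen s₁ hs₁) (hlen s₂ hs₂) hLeq
    apply Subtype.ext
    show s₁ = s₂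
    rw [hedg s₁ hs₁, hedg s₂ hs₂, hedgeq]
  have key : μ ≤ T.ncard ^ k := by
    calc μ = Nat.card C := by rw [hμ, hCdef]; exact (Nat.card_coe_set_eq _).symm
    _ ≤ Nat.card (Fin k → ↥T) := Nat.card_le_card_of_injective f hfinj
    _ = Nat.card ↥T ^ k := by rw [Nat.card_fun]; simp
    _ = T.ncard ^ k := by rw [Nat.card_coe_set_eq]
  have hk0 : (k : ℝ) ≠ 0 := by positivity
  have h1 : (μ : ℝ) ^ ((1 : ℝ) / k) ≤ ((T.ncard ^ k : ℕ) : ℝ) ^ ((1 : ℝ) / k) :=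
    Real.rpow_le_rpow (by positivity) (by exact_mod_cast key) (by positivity)
  have h2 : ((T.ncard ^ k : ℕ) : ℝ) ^ ((1 : ℝ) / k) = (T.ncard : ℝ) := by
    push_cast
    rw [← Real.rpow_natCast (T.ncard : ℝ) k, ← Real.rpow_mul (by positivity),
      mul_one_div, div_self hk0, Real.rpow_one]
  exact h1.trans_eq h2
end
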